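/- Let n ≥ 2 and let g, t, d, e be positive integers. Set r = 16·g·t²·d⁴ and M = 1 + 4·g·t²·d⁴·(n − 1) + 16·g·t²·d²·e. Let k and s be integers such that k²·M = 16·t²·d⁴·s and such that gcd(r, gcd(|k|, |s|)) = 1. Then gcd(r, |k|) = 4·t·d². -/

import Mathlib

/-- Arithmetic content of Proposition 2.3(b): for the isotropic primitive Mukai
vector `(r, kĤ, s)` with `r = 16gt²d⁴` and `Ĥ² = 2gM`, one has
`gcd(r, |k|) = 4td²`. -/
theorem stmt_7 (n g t d e : ℤ) (hn : 2 ≤ n)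
    (hg : 0 < g) (ht : 0 < t) (hd : 0 < d) (he : 0 < e)
    (k s : ℤ)
    (hisot : k ^ 2 * (1 + 4 * g * t ^ 2 * d ^ 4 * (n - 1) + 16 * g * t ^ 2 * d ^ 2 * e)
      = 16 * t ^ 2 * d ^ 4 * s)
    (hprim : Int.gcd (16 * g * t ^ 2 * d ^ 4) (Int.gcd k s) = 1) :
    (Int.gcd (16 * g * t ^ 2 * d ^ 4) k : ℤ) = 4 * t * d ^ 2 := by
  set M : ℤ := 1 + 4 * g * t ^ 2 * d ^ 4 * (n - 1) + 16 * g * t ^ 2 * d ^ 2 * e with hM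
  -- M is coprime to 2td
  have hcop1 : IsCoprime (2 * t * d) M := by
    have : M = 1 + (2 * t * d) * (2 * g * t * d ^ 3 * (n - 1) + 8 * g * t * d * e) := by
      rw [hM]; ring
    rw [this]
    exact (isCoprime_one_right (x := 2 * t * d)).add_mul_left_right _
  have hcop : IsCoprime (16 * t ^ 2 * d ^ 4) M := by
    have h4 : IsCoprime ((2 * t * d) ^ 4) M := hcop1.pow_left
    exact h4.of_isCoprime_of_dvd_left ⟨t ^ 2, by ring⟩
  have hdvd : (16 * t ^ 2 * d ^ 4) ∣ k ^ 2 * M := ⟨s, hisot⟩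
  have hdvd2 : (16 * t ^ 2 * d ^ 4) ∣ k ^ 2 := hcop.dvd_of_dvd_mul_right hdvd
  have hsq : (4 * t * d ^ 2) ^ 2 ∣ k ^ 2 := by
    have : (4 * t * d ^ 2) ^ 2 = 16 * t ^ 2 * d ^ 4 := by ring
    rwa [this]
  have hk : (4 * t * d ^ 2) ∣ k := by
    have := (Int.pow_dvd_pow_iff (two_ne_zero)).mp hsq
    exact this
  obtain ⟨k', hk'⟩ := hk
  have htd : (0:ℤ) < 4 * t * d ^ 2 := by positivity
  have hne : (16 * t ^ 2 * d ^ 4 : ℤ) ≠ 0 := by positivity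
  have hs : s = k' ^ 2 * M := by
    have h : (16 * t ^ 2 * d ^ 4) * (k' ^ 2 * M) = (16 * t ^ 2 * d ^ 4) * s := by
      rw [← hisot, hk']; ring
    exact (mul_left_cancel₀ hne h).symm
  -- gcd(4gtd², k') = 1
  have hcop' : Int.gcd (4 * g * t * d ^ 2) k' = 1 := by
    set p : ℕ := Int.gcd (4 * g * t * d ^ 2) k' with hp
    have hpr : (p : ℤ) ∣ 16 * g * t ^ 2 * d ^ 4 :=
      (Int.gcd_dvd_left _ _).trans ⟨4 * t * d ^ 2, by ring⟩
    have hpk : (p : ℤ) ∣ k := hk' ▸ (Int.gcd_dvd_right _ _).mul_left _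
    have hps : (p : ℤ) ∣ s := by
      rw [hs]; exact (Int.gcd_dvd_right (a := 4 * g * t * d ^ 2) (b := k')).trans ⟨k' * M, by ring⟩
    have : (p : ℤ) ∣ (Int.gcd (16 * g * t ^ 2 * d ^ 4) (Int.gcd k s) : ℤ) :=
      Int.natCast_dvd_natCast.mpr (Int.dvd_gcd hpr (Int.natCast_dvd_natCast.mpr (Int.dvd_gcd hpk hps)))
    rw [hprim] at this
    exact_mod_cast Int.eq_one_of_dvd_one (by positivity) this
  have key : Int.gcd (16 * g * t ^ 2 * d ^ 4) k
      = Int.gcd ((4 * t * d ^ 2) * (4 * g * t * d ^ 2)) ((4 * t * d ^ 2) * k') := by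
    rw [hk']; ring_nf
  rw [key, Int.gcd_mul_left, hcop', mul_one]
  simp [Int.natAbs_of_nonneg htd.le, abs_of_pos htd]
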